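/- Let s ≥ 2 be an integer and let (a_n) be positive reals with a_0 > 0, (1+a_{n+1})^s = s·a_n + 1 for all n. Then a_n/a_{n+1} → 1 as n → ∞. -/

import Mathlib

lemma bern_strict_aux (s : ℕ) (hs : 2 ≤ s) (x : ℝ) (hx : 0 < x) :
    1 + (s : ℝ) * x < (1 + x) ^ s := by
  obtain ⟨k, rfl⟩ := Nat.exists_eq_add_of_le hs
  have h := one_add_mul_le_pow (by linarith : (-2:ℝ) ≤ x) k
  have hp : (1 + x) ^ (2 + k) = (1 + x) ^ 2 * (1 + x) ^ k := by
    rw [pow_add]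
  push_cast
  nlinarith [pow_pos (by linarith : (0:ℝ) < 1 + x) k, sq_nonneg x,
    mul_pos hx (pow_pos (by linarith : (0:ℝ) < 1 + x) k)]

theorem stmt_6 (s : ℕ) (hs : 2 ≤ s) (a : ℕ → ℝ)
    (hpos : ∀ n, 0 < a n)
    (hrec : ∀ n, (1 + a (n+1)) ^ s = (s : ℝ) * a n + 1) :
    Filter.Tendsto (fun n : ℕ => a n / a (n+1)) Filter.atTop (nhds 1) := by
  have hs0 : (0:ℝ) < s := by positivity
  -- decreasing
  have hdec : ∀ n, a (n+1) ≤ a n := by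
    intro n
    have hb := one_add_mul_le_pow (by have := hpos (n+1); linarith : (-2:ℝ) ≤ a (n+1)) s
    rw [hrec n] at hb
    have : (s:ℝ) * a (n+1) ≤ (s:ℝ) * a n := by linarith
    exact le_of_mul_le_mul_left this hs0
  have hanti : Antitone a := antitone_nat_of_succ_le hdec
  -- limit exists
  have hbdd : BddBelow (Set.range a) := ⟨0, by rintro _ ⟨n, rfl⟩; exact (hpos n).le⟩
  set L := ⨅ n, a n with hL
  have hlim : Filter.Tendsto a Filter.atTop (nhds L) := tendsto_atTop_ciInf hanti hbdd
  have hL0 : 0 ≤ L := le_ciInf fun n => (hpos n).le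
  -- limit equation
  have hlim' : Filter.Tendsto (fun n => a (n+1)) Filter.atTop (nhds L) :=
    hlim.comp (Filter.tendsto_add_atTop_nat 1)
  have heq : (1 + L) ^ s = (s:ℝ) * L + 1 := by
    have h1 : Filter.Tendsto (fun n => (1 + a (n+1)) ^ s) Filter.atTop (nhds ((1 + L) ^ s)) :=
      ((tendsto_const_nhds.add hlim').pow s)
    have h2 : Filter.Tendsto (fun n => (s:ℝ) * a n + 1) Filter.atTop (nhds ((s:ℝ) * L + 1)) :=
      (tendsto_const_nhds.mul hlim).add tendsto_const_nhds
    have : (fun n => (1 + a (n+1)) ^ s) = fun n => (s:ℝ) * a n + 1 := funext hrec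
    rw [this] at h1
    exact tendsto_nhds_unique h1 h2
  -- L = 0
  have hLz : L = 0 := by
    by_contra h
    have hLpos : 0 < L := lt_of_le_of_ne hL0 (Ne.symm h)
    have := bern_strict_aux s hs L hLpos
    linarith
  rw [hLz] at hlim'
  -- a(n+1) → 0 within ≠ 0
  have hlim'' : Filter.Tendsto (fun n => a (n+1)) Filter.atTop (nhdsWithin 0 {x : ℝ | x ≠ 0}) :=
    tendsto_nhdsWithin_iff.2 ⟨hlim', Filter.Eventually.of_forall fun n => (hpos (n+1)).ne'⟩
  -- derivative of (1+x)^s at 0 is s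
  have hder : HasDerivAt (fun x : ℝ => (1 + x) ^ s) (s : ℝ) 0 := by
    have h := ((hasDerivAt_id (0:ℝ)).const_add 1).fun_pow s
    simpa using h
  have hslope := hasDerivAt_iff_tendsto_slope.1 hder
  have hslope' : Filter.Tendsto (fun n => ((1 + a (n+1)) ^ s - 1) / a (n+1))
      Filter.atTop (nhds (s : ℝ)) := by
    have := hslope.comp hlim''
    refine this.congr fun n => ?_
    simp [slope_def_field, div_eq_div_iff]
  -- conclude
  have hfin : Filter.Tendsto (fun n => ((1 + a (n+1)) ^ s - 1) / a (n+1) / s)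
      Filter.atTop (nhds ((s:ℝ) / s)) := hslope'.div_const s
  rw [div_self hs0.ne'] at hfin
  refine hfin.congr fun n => ?_
  rw [hrec n, add_sub_cancel_right, div_div, mul_comm (a (n+1)), ← div_div,
    mul_div_cancel_left₀ _ hs0.ne']
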